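/- Let C be a nonempty combinatorial code on n neurons and let Γ = CF(I_C) be the canonical form of its vanishing ideal. Set Γ' = {x^σ(1−x)^τ ∈ Γ : |σ| ≤ 1}. Then Γ' is exactly the canonical form CF(I_Č) of the vanishing ideal of the union completion Č of C. -/
import Mathlib


open MvPolynomial

/-- The pseudomonomial `x^σ (1-x)^τ` in `F₂[x₁,…,xₙ]`. -/
noncomputable def pseudoMonomial {n : ℕ} (σ τ : Finset (Fin n)) :
    MvPolynomial (Fin n) (ZMod 2) :=
  (∏ i ∈ σ, X i) * (∏ j ∈ τ, (1 - X j))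

/-- The indicator vector of a codeword. -/
def evalPt {n : ℕ} (c : Finset (Fin n)) : Fin n → ZMod 2 :=
  fun i => if i ∈ c then 1 else 0

/-- Membership in the vanishing ideal `I_C`: vanishing at every codeword. -/
def InVanishingIdeal {n : ℕ} (C : Finset (Finset (Fin n)))
    (p : MvPolynomial (Fin n) (ZMod 2)) : Prop :=
  ∀ c ∈ C, eval (evalPt c) p = 0

/-- `(σ, τ)` gives an element `x^σ(1-x)^τ` of the canonical form `CF(I_C)`:
a squarefree pseudomonomial in `I_C`, minimal with respect to divisibility
among squarefree pseudomonomials in `I_C`. -/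
def InCanonicalForm {n : ℕ} (C : Finset (Finset (Fin n))) (σ τ : Finset (Fin n)) : Prop :=
  Disjoint σ τ ∧ InVanishingIdeal C (pseudoMonomial σ τ) ∧
    ∀ σ' τ' : Finset (Fin n), Disjoint σ' τ' →
      InVanishingIdeal C (pseudoMonomial σ' τ') →
      pseudoMonomial σ' τ' ∣ pseudoMonomial σ τ →
      pseudoMonomial σ' τ' = pseudoMonomial σ τ

/-- A code is intersection-complete if it is closed under pairwise intersections. -/
def IntersectionComplete {n : ℕ} (C : Finset (Finset (Fin n))) : Prop :=
  ∀ σ ∈ C, ∀ τ ∈ C, σ ∩ τ ∈ C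

/-- The union completion of `C`: all unions of nonempty subfamilies of `C`. -/
def unionCompletion {n : ℕ} (C : Finset (Finset (Fin n))) : Finset (Finset (Fin n)) :=
  (C.powerset.filter (· ≠ ∅)).image (fun S => S.sup id)

lemma eval_pm {n : ℕ} (σ τ c : Finset (Fin n)) :
    eval (evalPt c) (pseudoMonomial σ τ)
      = if σ ⊆ c ∧ Disjoint τ c then 1 else 0 := by
  simp only [pseudoMonomial, map_mul, map_prod, map_sub, map_one, eval_X, evalPt]
  by_cases hs : σ ⊆ c
  · by_cases ht : Disjoint τ c
    · rw [if_pos ⟨hs, ht⟩, Finset.prod_eq_one, Finset.prod_eq_one, mul_one]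
      · intro j hj; rw [if_neg (Finset.disjoint_left.mp ht hj)]; ring
      · intro i hi; rw [if_pos (hs hi)]
    · rw [if_neg (by tauto)]
      obtain ⟨j, hj, hjc⟩ := Finset.not_disjoint_iff.mp ht
      rw [Finset.prod_eq_zero hj (by rw [if_pos hjc]; ring), mul_zero]
  · rw [if_neg (by tauto)]
    obtain ⟨i, hi, hic⟩ := Finset.not_subset.mp hs
    rw [Finset.prod_eq_zero hi (if_neg hic : (if i ∈ c then (1:ZMod 2) else 0) = 0), zero_mul]

lemma vanish_iff {n : ℕ} (C : Finset (Finset (Fin n))) (σ τ : Finset (Fin n)) :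
    InVanishingIdeal C (pseudoMonomial σ τ) ↔ ∀ c ∈ C, ¬(σ ⊆ c ∧ Disjoint τ c) := by
  unfold InVanishingIdeal
  refine forall₂_congr fun c _ => ?_
  rw [eval_pm]; split <;> simp_all

lemma pm_dvd_of_subset {n : ℕ} {σ' τ' σ τ : Finset (Fin n)} (hσ : σ' ⊆ σ) (hτ : τ' ⊆ τ) :
    pseudoMonomial σ' τ' ∣ pseudoMonomial σ τ := by
  refine ⟨pseudoMonomial (σ \ σ') (τ \ τ'), ?_⟩
  unfold pseudoMonomial
  rw [← Finset.prod_sdiff hσ, ← Finset.prod_sdiff hτ]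
  ring

lemma subset_of_pm_dvd {n : ℕ} {σ' τ' σ τ : Finset (Fin n)} (hd : Disjoint σ τ)
    (hdvd : pseudoMonomial σ' τ' ∣ pseudoMonomial σ τ) : σ' ⊆ σ ∧ τ' ⊆ τ := by
  have key : ∀ c : Finset (Fin n), σ ⊆ c → Disjoint τ c → σ' ⊆ c ∧ Disjoint τ' c := by
    intro c h1 h2
    obtain ⟨r, hr⟩ := hdvd
    have : eval (evalPt c) (pseudoMonomial σ' τ') ≠ 0 := by
      intro h0
      have := congrArg (eval (evalPt c)) hr
      rw [map_mul, h0, zero_mul, eval_pm, if_pos ⟨h1, h2⟩] at this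
      exact one_ne_zero this
    rw [eval_pm] at this
    by_contra hcon
    rw [if_neg hcon] at this; exact this rfl
  constructor
  · intro i hi
    by_contra hic
    have hkey := key ((Finset.univ \ τ) \ {i}) ?_ ?_
    · exact (Finset.mem_sdiff.mp (hkey.1 hi)).2 (Finset.mem_singleton_self i)
    · intro a ha
      simp only [Finset.mem_sdiff, Finset.mem_univ, Finset.mem_singleton, true_and]
      exact ⟨Finset.disjoint_left.mp hd ha, fun h => hic (h ▸ ha)⟩
    · rw [Finset.disjoint_left]
      intro a ha hmem
      exact (Finset.mem_sdiff.mp (Finset.mem_sdiff.mp hmem).1).2 ha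
  · intro j hj
    by_contra hjc
    have hkey := key (Finset.univ \ τ) (fun a ha => Finset.mem_sdiff.mpr
        ⟨Finset.mem_univ a, Finset.disjoint_left.mp hd ha⟩)
      (Finset.disjoint_left.mpr fun a ha hmem => (Finset.mem_sdiff.mp hmem).2 ha)
    exact Finset.disjoint_left.mp hkey.2 hj
      (Finset.mem_sdiff.mpr ⟨Finset.mem_univ j, hjc⟩)

lemma pm_inj {n : ℕ} {σ' τ' σ τ : Finset (Fin n)} (hd' : Disjoint σ' τ') (hd : Disjoint σ τ)
    (h : pseudoMonomial σ' τ' = pseudoMonomial σ τ) : σ' = σ ∧ τ' = τ := by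
  obtain ⟨h1, h2⟩ := subset_of_pm_dvd hd (dvd_of_eq h)
  obtain ⟨h3, h4⟩ := subset_of_pm_dvd hd' (dvd_of_eq h.symm)
  exact ⟨Finset.Subset.antisymm h1 h3, Finset.Subset.antisymm h2 h4⟩

lemma mem_unionCompletion {n : ℕ} {C : Finset (Finset (Fin n))} {c : Finset (Fin n)} :
    c ∈ unionCompletion C ↔ ∃ S, S ⊆ C ∧ S.Nonempty ∧ c = S.sup id := by
  simp only [unionCompletion, Finset.mem_image, Finset.mem_filter, Finset.mem_powerset,
    ← Finset.nonempty_iff_ne_empty]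
  constructor
  · rintro ⟨S, ⟨hS, hne⟩, rfl⟩; exact ⟨S, hS, hne, rfl⟩
  · rintro ⟨S, hS, hne, rfl⟩; exact ⟨S, ⟨hS, hne⟩, rfl⟩

lemma self_subset_unionCompletion {n : ℕ} {C : Finset (Finset (Fin n))} :
    C ⊆ unionCompletion C := by
  intro c hc
  exact mem_unionCompletion.mpr ⟨{c}, Finset.singleton_subset_iff.mpr hc,
    Finset.singleton_nonempty c, by simp⟩

lemma vanish_of_vanish_uc {n : ℕ} {C : Finset (Finset (Fin n))}
    {p : MvPolynomial (Fin n) (ZMod 2)}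
    (h : InVanishingIdeal (unionCompletion C) p) : InVanishingIdeal C p :=
  fun c hc => h c (self_subset_unionCompletion hc)

lemma vanish_uc_of_card_le_one {n : ℕ} {C : Finset (Finset (Fin n))} {σ τ : Finset (Fin n)}
    (hcard : σ.card ≤ 1) (h : InVanishingIdeal C (pseudoMonomial σ τ)) :
    InVanishingIdeal (unionCompletion C) (pseudoMonomial σ τ) := by
  rw [vanish_iff] at h ⊢
  rintro c hc ⟨hsub, hdisj⟩
  obtain ⟨S, hS, hne, rfl⟩ := mem_unionCompletion.mp hc
  rcases Finset.eq_empty_or_nonempty σ with hσ | hσ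
  · obtain ⟨s, hs⟩ := hne
    exact h s (hS hs) ⟨hσ ▸ Finset.empty_subset s,
      hdisj.mono_right (Finset.le_sup (f := id) hs)⟩
  · obtain ⟨i, rfl⟩ := Finset.card_eq_one.mp (le_antisymm hcard hσ.card_pos)
    have hi : i ∈ S.sup id := hsub (Finset.mem_singleton_self i)
    obtain ⟨s, hs, his⟩ := Finset.mem_sup.mp hi
    exact h s (hS hs) ⟨Finset.singleton_subset_iff.mpr his,
      hdisj.mono_right (Finset.le_sup (f := id) hs)⟩

lemma card_le_one_of_min {n : ℕ} {C : Finset (Finset (Fin n))} {σ τ : Finset (Fin n)}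
    (hd : Disjoint σ τ)
    (hv : InVanishingIdeal (unionCompletion C) (pseudoMonomial σ τ))
    (hmin : ∀ σ' τ' : Finset (Fin n), Disjoint σ' τ' →
      InVanishingIdeal (unionCompletion C) (pseudoMonomial σ' τ') →
      pseudoMonomial σ' τ' ∣ pseudoMonomial σ τ →
      pseudoMonomial σ' τ' = pseudoMonomial σ τ) : σ.card ≤ 1 := by
  by_contra hcard
  push_neg at hcard
  -- σ is nonempty
  have hσne : σ.Nonempty := Finset.card_pos.mp (by omega)
  -- claim: some i in σ has pm {i} τ vanishing on the union completion
  by_cases hex : ∃ i ∈ σ, InVanishingIdeal (unionCompletion C) (pseudoMonomial {i} τ)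
  · obtain ⟨i, hi, hvi⟩ := hex
    have hdisj_i : Disjoint ({i} : Finset (Fin n)) τ :=
      Finset.disjoint_singleton_left.mpr (Finset.disjoint_left.mp hd hi)
    have heq := hmin {i} τ hdisj_i hvi
      (pm_dvd_of_subset (Finset.singleton_subset_iff.mpr hi) Finset.Subset.rfl)
    have := (pm_inj hdisj_i hd heq).1
    rw [← this] at hcard
    simp at hcard
  · push_neg at hex
    -- for each i ∈ σ, find s_i ∈ C with i ∈ s_i and Disjoint τ s_i
    have hpick : ∀ i ∈ σ, ∃ s ∈ C, i ∈ s ∧ Disjoint τ s := by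
      intro i hi
      have := hex i hi
      rw [vanish_iff] at this
      push_neg at this
      obtain ⟨c, hc, hsub, hdisj⟩ := this
      obtain ⟨S, hS, hne, rfl⟩ := mem_unionCompletion.mp hc
      obtain ⟨s, hs, his⟩ := Finset.mem_sup.mp (hsub (Finset.mem_singleton_self i))
      exact ⟨s, hS hs, his, hdisj.mono_right (Finset.le_sup (f := id) hs)⟩
    choose f hf1 hf2 hf3 using hpick
    set S : Finset (Finset (Fin n)) := σ.attach.image (fun i => f i.1 i.2) with hSdef
    have hSsub : S ⊆ C := by
      intro s hs
      obtain ⟨i, _, rfl⟩ := Finset.mem_image.mp hs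
      exact hf1 i.1 i.2
    have hSne : S.Nonempty := by
      obtain ⟨i, hi⟩ := hσne
      exact ⟨f i hi, Finset.mem_image.mpr ⟨⟨i, hi⟩, Finset.mem_attach _ _, rfl⟩⟩
    have hcmem : S.sup id ∈ unionCompletion C := mem_unionCompletion.mpr ⟨S, hSsub, hSne, rfl⟩
    rw [vanish_iff] at hv
    refine hv (S.sup id) hcmem ⟨?_, ?_⟩
    · intro i hi
      exact Finset.mem_sup.mpr ⟨f i hi,
        Finset.mem_image.mpr ⟨⟨i, hi⟩, Finset.mem_attach _ _, rfl⟩, hf2 i hi⟩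
    · rw [Finset.disjoint_sup_right]
      intro s hs
      obtain ⟨i, _, rfl⟩ := Finset.mem_image.mp hs
      exact hf3 i.1 i.2

/-- For a nonempty code `C`, the subset `Γ' = {x^σ(1-x)^τ ∈ CF(I_C) : |σ| ≤ 1}`
of the canonical form of `C` is exactly the canonical form of the vanishing
ideal of the union completion of `C`. -/
theorem canonicalForm_of_unionCompletion
    (n : ℕ) (C : Finset (Finset (Fin n))) (hC : C.Nonempty) :
    ∀ σ τ : Finset (Fin n),
      (InCanonicalForm C σ τ ∧ σ.card ≤ 1) ↔ InCanonicalForm (unionCompletion C) σ τ := by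
  intro σ τ
  constructor
  · rintro ⟨⟨hdisj, hvan, hmin⟩, hcard⟩
    refine ⟨hdisj, vanish_uc_of_card_le_one hcard hvan, ?_⟩
    intro σ' τ' hd' hv' hdvd
    exact hmin σ' τ' hd' (vanish_of_vanish_uc hv') hdvd
  · rintro ⟨hdisj, hvan, hmin⟩
    have hcard := card_le_one_of_min hdisj hvan hmin
    refine ⟨⟨hdisj, vanish_of_vanish_uc hvan, ?_⟩, hcard⟩
    intro σ' τ' hd' hv' hdvd
    have hsub := subset_of_pm_dvd hdisj hdvd
    have hcard' : σ'.card ≤ 1 := le_trans (Finset.card_le_card hsub.1) hcard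
    exact hmin σ' τ' hd' (vanish_uc_of_card_le_one hcard' hv') hdvd
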